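/- Let K ⊆ K' be an algebraically pure field extension with K ℵ₀-complete, x = (x₁,...,xₙ), and f ∈ K[[x]][Y]^r with Y = (Y₁,...,Y_m). Suppose there exists ŷ ∈ K'[[x]]^m with f(ŷ) = 0 and ŷ_i ∈ K'[[x_{J_i}]] for subsets J_i ⊆ {1,...,n}. Then there exists y ∈ K[[x]]^m with f(y) = 0, y_i ∈ K[[x_{J_i}]], and ord(y_i) = ord(ŷ_i) for all i ∈ {1,...,m}. -/

import Mathlib

/-- A field `K` is ℵ₀-complete if every countable system of polynomial equations over `K`
(in countably many indeterminates) has a solution in `K` whenever every finite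
sub-system has a solution in `K`. -/
def Aleph0Complete (K : Type*) [Field K] : Prop :=
  ∀ S : ℕ → MvPolynomial ℕ K,
    (∀ T : Finset ℕ, ∃ x : ℕ → K, ∀ N ∈ T, MvPolynomial.eval x (S N) = 0) →
    ∃ x : ℕ → K, ∀ N : ℕ, MvPolynomial.eval x (S N) = 0

/-- A morphism of fields `φ : K →+* L` is algebraically pure if every finite system of
polynomial equations with coefficients in `K` having a solution in `L` has a solution in `K`. -/
def AlgebraicallyPure {K L : Type*} [Field K] [Field L] (φ : K →+* L) : Prop :=
  ∀ (m r : ℕ) (f : Fin r → MvPolynomial (Fin m) K),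
    (∃ y : Fin m → L, ∀ k, MvPolynomial.eval y (MvPolynomial.map φ (f k)) = 0) →
    ∃ y : Fin m → K, ∀ k, MvPolynomial.eval y (f k) = 0

/-- `g ∈ K[[x_J]]`: the power series `g` only involves the variables `x_j` for `j ∈ J`. -/
def DependsOnVars {K : Type*} [Field K] {n : ℕ} (J : Set (Fin n)) (g : MvPowerSeries (Fin n) K) : Prop :=
  ∀ α : Fin n →₀ ℕ, ¬ (↑α.support ⊆ J) → MvPowerSeries.coeff α g = 0

/-- `OrdGE g c` means `ord g ≥ c`, i.e. `g ∈ (x)^c`. -/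
def OrdGE {K : Type*} [Field K] {n : ℕ} (g : MvPowerSeries (Fin n) K) (c : ℕ) : Prop :=
  ∀ α : Fin n →₀ ℕ, (∑ j, α j) < c → MvPowerSeries.coeff α g = 0

/-- `OrdEq g c` means `ord g = c` exactly. -/
def OrdEq {K : Type*} [Field K] {n : ℕ} (g : MvPowerSeries (Fin n) K) (c : ℕ) : Prop :=
  OrdGE g c ∧ ¬ OrdGE g (c + 1)


noncomputable section
namespace ApproxAux

open MvPolynomial

variable {K : Type*} [Field K] {n m : ℕ}

/-- Variable index type: coefficient unknowns and auxiliary unknowns. -/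
abbrev Idx (n m : ℕ) := (Fin m × (Fin n →₀ ℕ)) ⊕ (Fin m × (Fin n →₀ ℕ))

/-- The generic power series whose coefficients are indeterminates. -/
def Ybig (K : Type*) [Field K] (n m : ℕ) (i : Fin m) :
    MvPowerSeries (Fin n) (MvPolynomial (Idx n m) K) :=
  fun α => MvPolynomial.X (Sum.inl (i, α))

lemma coeff_Ybig (i : Fin m) (α : Fin n →₀ ℕ) :
    MvPowerSeries.coeff α (Ybig K n m i) = MvPolynomial.X (Sum.inl (i, α)) := rfl

/-- The universal polynomial expressing coefficient `α` of `f(Y)`. -/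
def P (f : MvPolynomial (Fin m) (MvPowerSeries (Fin n) K)) (α : Fin n →₀ ℕ) :
    MvPolynomial (Idx n m) K :=
  MvPowerSeries.coeff α
    (MvPolynomial.eval (Ybig K n m)
      (MvPolynomial.map (MvPowerSeries.map
        (MvPolynomial.C : K →+* MvPolynomial (Idx n m) K)) f))

lemma psi_P {S : Type*} [CommRing S] (ψ : MvPolynomial (Idx n m) K →+* S)
    (f : MvPolynomial (Fin m) (MvPowerSeries (Fin n) K)) (α : Fin n →₀ ℕ) :
    ψ (P f α) = MvPowerSeries.coeff α
      (MvPolynomial.eval (fun i => MvPowerSeries.map ψ (Ybig K n m i))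
        (MvPolynomial.map (MvPowerSeries.map (ψ.comp MvPolynomial.C)) f)) := by
  rw [P, ← MvPowerSeries.coeff_map]
  congr 1
  rw [eval_map, eval_map, eval₂_comp_left (MvPowerSeries.map ψ), ← MvPowerSeries.map_comp]
  congr 1


/-- The power series over `K` built from a coefficient function. -/
def mkSeries (x : Idx n m → K) (i : Fin m) : MvPowerSeries (Fin n) K :=
  fun α => x (Sum.inl (i, α))

lemma coeff_mkSeries (x : Idx n m → K) (i : Fin m) (α : Fin n →₀ ℕ) :
    MvPowerSeries.coeff α (mkSeries x i) = x (Sum.inl (i, α)) := rfl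

lemma eval_P (x : Idx n m → K) (f : MvPolynomial (Fin m) (MvPowerSeries (Fin n) K))
    (α : Fin n →₀ ℕ) :
    MvPolynomial.eval x (P f α)
      = MvPowerSeries.coeff α (MvPolynomial.eval (mkSeries x) f) := by
  have h := psi_P (MvPolynomial.eval x : MvPolynomial (Idx n m) K →+* K) f α
  have hC : (MvPolynomial.eval x : MvPolynomial (Idx n m) K →+* K).comp MvPolynomial.C
      = RingHom.id K := by ext a; simp
  rw [hC, MvPowerSeries.map_id] at h
  have hY : (fun i => (MvPowerSeries.map
      (MvPolynomial.eval x : MvPolynomial (Idx n m) K →+* K)) (Ybig K n m i)) = mkSeries x := by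
    funext i; ext β
    rw [MvPowerSeries.coeff_map, coeff_Ybig, coeff_mkSeries]; simp
  rw [hY] at h
  simpa using h

lemma eval_map_P {K' : Type*} [Field K'] (φ : K →+* K') (x' : Idx n m → K')
    (f : MvPolynomial (Fin m) (MvPowerSeries (Fin n) K)) (α : Fin n →₀ ℕ)
    (yh : Fin m → MvPowerSeries (Fin n) K')
    (hy : ∀ i β, x' (Sum.inl (i, β)) = MvPowerSeries.coeff β (yh i)) :
    MvPolynomial.eval x' (MvPolynomial.map φ (P f α))
      = MvPowerSeries.coeff α
          (MvPolynomial.eval yh (MvPolynomial.map (MvPowerSeries.map φ) f)) := by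
  have h := psi_P ((MvPolynomial.eval x' : MvPolynomial (Idx n m) K' →+* K').comp
      (MvPolynomial.map φ : MvPolynomial (Idx n m) K →+* MvPolynomial (Idx n m) K')) f α
  have hC : ((MvPolynomial.eval x' : MvPolynomial (Idx n m) K' →+* K').comp
      (MvPolynomial.map φ : MvPolynomial (Idx n m) K →+* MvPolynomial (Idx n m) K')).comp
      MvPolynomial.C = φ := by ext a; simp
  rw [hC] at h
  have hY : (fun i => (MvPowerSeries.map
      ((MvPolynomial.eval x' : MvPolynomial (Idx n m) K' →+* K').comp
        (MvPolynomial.map φ : MvPolynomial (Idx n m) K →+* MvPolynomial (Idx n m) K')))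
      (Ybig K n m i)) = yh := by
    funext i; ext β
    rw [MvPowerSeries.coeff_map, coeff_Ybig]
    simp [hy]
  rw [hY] at h
  simpa using h


open MvPolynomial

-- OrdGE helper lemmas

lemma ordGE_of_le {K : Type*} [Field K] {n : ℕ} {g : MvPowerSeries (Fin n) K} {b c : ℕ}
    (h : OrdGE g c) (hbc : b ≤ c) : OrdGE g b :=
  fun α hα => h α (lt_of_lt_of_le hα hbc)

lemma exists_ordEq {K : Type*} [Field K] {n : ℕ} (g : MvPowerSeries (Fin n) K)
    (hg : g ≠ 0) : ∃ c, OrdGE g c ∧ ¬ OrdGE g (c + 1) := by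
  classical
  have hex : ∃ α : Fin n →₀ ℕ, MvPowerSeries.coeff α g ≠ 0 := by
    by_contra h
    push_neg at h
    exact hg (MvPowerSeries.ext fun α => by rw [h α, map_zero])
  obtain ⟨α, hα⟩ := hex
  have hP : ∃ c, ¬ OrdGE g (c + 1) := by
    refine ⟨∑ j, α j, fun h => hα (h α ?_)⟩
    omega
  set c₀ := Nat.find hP with hc₀
  refine ⟨c₀, ?_, Nat.find_spec hP⟩
  rcases Nat.eq_zero_or_pos c₀ with h0 | hpos
  · rw [h0]
    intro β hβ
    omega
  · have := Nat.find_min hP (m := c₀ - 1) (by omega)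
    rw [not_not] at this
    have hc : c₀ - 1 + 1 = c₀ := by omega
    rwa [hc] at this

lemma ordGE_iff_le {K : Type*} [Field K] {n : ℕ} {g : MvPowerSeries (Fin n) K} {c : ℕ}
    (h1 : OrdGE g c) (h2 : ¬ OrdGE g (c + 1)) (b : ℕ) : OrdGE g b ↔ b ≤ c := by
  constructor
  · intro hb
    by_contra hbc
    exact h2 (ordGE_of_le hb (by omega))
  · exact ordGE_of_le h1

lemma descend_finite {K K' : Type*} [Field K] [Field K'] (φ : K →+* K')
    (hpure : AlgebraicallyPure φ) {ι : Type*} (t : Finset (MvPolynomial ι K))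
    (x' : ι → K') (hx' : ∀ p ∈ t, MvPolynomial.eval x' (MvPolynomial.map φ p) = 0) :
    ∃ x : ι → K, ∀ p ∈ t, MvPolynomial.eval x p = 0 := by
  classical
  set V : Finset ι := t.sup (fun p => p.vars) with hV
  set c := V.card with hc
  set g : ι → Fin (c + 1) := fun v =>
    if h : v ∈ V then (V.equivFin ⟨v, h⟩).castSucc else Fin.last c with hg
  set y' : Fin (c + 1) → K' := fun j =>
    if h : j = Fin.last c then 0 else x' ((V.equivFin.symm (j.castPred h)) : ι) with hy'
  have hgy : ∀ v ∈ V, y' (g v) = x' v := by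
    intro v hv
    have h1 : g v = (V.equivFin ⟨v, hv⟩).castSucc := by simp [hg, dif_pos hv]
    have h2 : (V.equivFin ⟨v, hv⟩).castSucc ≠ Fin.last c :=
      ne_of_lt (Fin.castSucc_lt_last _)
    rw [h1, hy']
    simp only [dif_neg h2, Fin.castPred_castSucc, Equiv.symm_apply_apply]
  have key : ∀ p ∈ t, MvPolynomial.eval y' (MvPolynomial.map φ (rename g p)) = 0 := by
    intro p hp
    rw [map_rename, eval_rename]
    have hsub : p.vars ⊆ V := Finset.le_sup (f := fun p : MvPolynomial ι K => p.vars) hp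
    have : MvPolynomial.eval (y' ∘ g) (MvPolynomial.map φ p)
        = MvPolynomial.eval x' (MvPolynomial.map φ p) := by
      apply eval₂Hom_congr' rfl _ rfl
      intro i hi _
      exact hgy i (hsub (vars_map p φ hi))
    rw [this]
    exact hx' p hp
  obtain ⟨z, hz⟩ := hpure (c + 1) t.card
    (fun k => rename g ((t.equivFin.symm k : t) : MvPolynomial ι K))
    ⟨y', fun k => key _ (t.equivFin.symm k).2⟩
  refine ⟨z ∘ g, fun p hp => ?_⟩
  have := hz (t.equivFin ⟨p, hp⟩)
  rw [Equiv.symm_apply_apply] at this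
  rwa [eval_rename] at this

lemma solve_all {K : Type*} [Field K] (hK : Aleph0Complete K) {ι ε : Type*}
    [Countable ι] [Countable ε] (F : ε → MvPolynomial ι K)
    (hfin : ∀ t : Finset ε, ∃ x : ι → K, ∀ e ∈ t, MvPolynomial.eval x (F e) = 0) :
    ∃ x : ι → K, ∀ e, MvPolynomial.eval x (F e) = 0 := by
  classical
  obtain ⟨eι, heι⟩ := Countable.exists_injective_nat ι
  obtain ⟨eε, heε⟩ := Countable.exists_injective_nat ε
  set d : ℕ → Option ε := fun N => if h : ∃ e, eε e = N then some h.choose else none with hd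
  have hdval : ∀ (a : ℕ) (b : ε), d a = some b → eε b = a := by
    intro a b hb
    rw [hd] at hb
    simp only at hb
    split_ifs at hb with h
    · obtain rfl : h.choose = b := by injection hb
      exact h.choose_spec
  have hdinj : ∀ (a a' : ℕ) (b : ε), b ∈ d a → b ∈ d a' → a = a' := by
    intro a a' b hb hb'
    rw [Option.mem_def] at hb hb'
    rw [← hdval a b hb, ← hdval a' b hb']
  have hdspec : ∀ e : ε, d (eε e) = some e := by
    intro e
    have h : ∃ e', eε e' = eε e := ⟨e, rfl⟩
    rw [hd]
    simp only [dif_pos h]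
    congr 1
    exact heε h.choose_spec
  have hmain := hK (fun N => (d N).elim 0 (fun e => rename eι (F e))) ?_
  · obtain ⟨gs, hgs⟩ := hmain
    refine ⟨gs ∘ eι, fun e => ?_⟩
    have := hgs (eε e)
    simp only [hdspec e, Option.elim_some] at this
    rwa [eval_rename] at this
  · intro T
    obtain ⟨x, hx⟩ := hfin (T.filterMap d hdinj)
    refine ⟨Function.extend eι x 0, fun N hN => ?_⟩
    cases hdN : d N with
    | none => simp
    | some e =>
      have het : e ∈ T.filterMap d hdinj := by
        rw [Finset.mem_filterMap]
        exact ⟨N, hN, hdN⟩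
      simp only [Option.elim_some]
      rw [eval_rename]
      have hcomp : (Function.extend eι x 0) ∘ eι = x := by
        funext v; exact heι.extend_apply x 0 v
      rw [hcomp]
      exact hx e het


-- The system of equations
open Classical in
noncomputable def Eqs {K K' : Type*} [Field K] [Field K'] {n m r : ℕ}
    (f : Fin r → MvPolynomial (Fin m) (MvPowerSeries (Fin n) K))
    (J : Fin m → Set (Fin n)) (yh : Fin m → MvPowerSeries (Fin n) K')
    (c : Fin m → ℕ) (a : Fin m → (Fin n →₀ ℕ)) :
    ((Fin r × (Fin n →₀ ℕ)) ⊕ (Fin m × (Fin n →₀ ℕ)) ⊕ Fin m) →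
      MvPolynomial (Idx n m) K
  | Sum.inl (k, α) => P (f k) α
  | Sum.inr (Sum.inl (i, α)) =>
      if (¬ (↑α.support ⊆ J i)) ∨ yh i = 0 ∨ (∑ j, α j) < c i
      then MvPolynomial.X (Sum.inl (i, α)) else 0
  | Sum.inr (Sum.inr i) =>
      if yh i = 0 then 0
      else MvPolynomial.X (Sum.inl (i, a i)) * MvPolynomial.X (Sum.inr (i, a i)) - 1

lemma Eqs_inl {K K' : Type*} [Field K] [Field K'] {n m r : ℕ}
    (f : Fin r → MvPolynomial (Fin m) (MvPowerSeries (Fin n) K))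
    (J : Fin m → Set (Fin n)) (yh : Fin m → MvPowerSeries (Fin n) K')
    (c : Fin m → ℕ) (a : Fin m → (Fin n →₀ ℕ)) (k : Fin r) (α : Fin n →₀ ℕ) :
    Eqs f J yh c a (Sum.inl (k, α)) = P (f k) α := rfl

open Classical in
lemma Eqs_inr_inl {K K' : Type*} [Field K] [Field K'] {n m r : ℕ}
    (f : Fin r → MvPolynomial (Fin m) (MvPowerSeries (Fin n) K))
    (J : Fin m → Set (Fin n)) (yh : Fin m → MvPowerSeries (Fin n) K')
    (c : Fin m → ℕ) (a : Fin m → (Fin n →₀ ℕ)) (i : Fin m) (α : Fin n →₀ ℕ) :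
    Eqs f J yh c a (Sum.inr (Sum.inl (i, α)))
      = if (¬ (↑α.support ⊆ J i)) ∨ yh i = 0 ∨ (∑ j, α j) < c i
        then MvPolynomial.X (Sum.inl (i, α)) else 0 := rfl

open Classical in
lemma Eqs_inr_inr {K K' : Type*} [Field K] [Field K'] {n m r : ℕ}
    (f : Fin r → MvPolynomial (Fin m) (MvPowerSeries (Fin n) K))
    (J : Fin m → Set (Fin n)) (yh : Fin m → MvPowerSeries (Fin n) K')
    (c : Fin m → ℕ) (a : Fin m → (Fin n →₀ ℕ)) (i : Fin m) :
    Eqs f J yh c a (Sum.inr (Sum.inr i))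
      = if yh i = 0 then 0
        else MvPolynomial.X (Sum.inl (i, a i)) * MvPolynomial.X (Sum.inr (i, a i)) - 1 := rfl

end ApproxAux
end

/-- Approximation over an algebraically pure extension: a solution over `K'[[x]]` with
constraints descends to a solution over `K[[x]]` with the same constraints and the same
orders, when `K → K'` is algebraically pure and `K` is ℵ₀-complete. -/
theorem approximation_algebraically_pure {K K' : Type*} [Field K] [Field K'] (φ : K →+* K')
    (hpure : AlgebraicallyPure φ) (hK : Aleph0Complete K)
    (n m r : ℕ) (f : Fin r → MvPolynomial (Fin m) (MvPowerSeries (Fin n) K))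
    (J : Fin m → Set (Fin n)) (yh : Fin m → MvPowerSeries (Fin n) K')
    (hsol : ∀ k, MvPolynomial.eval yh
      (MvPolynomial.map (MvPowerSeries.map φ) (f k)) = 0)
    (hcon : ∀ i, DependsOnVars (J i) (yh i)) :
    ∃ y : Fin m → MvPowerSeries (Fin n) K,
      (∀ k, MvPolynomial.eval y (f k) = 0) ∧
      (∀ i, DependsOnVars (J i) (y i)) ∧
      (∀ i (c : ℕ), OrdGE (y i) c ↔ OrdGE (yh i) c) := by
  classical
  -- order data for each `yh i`
  have hcex : ∀ i : Fin m, ∃ c : ℕ, yh i ≠ 0 → OrdGE (yh i) c ∧ ¬ OrdGE (yh i) (c + 1) := by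
    intro i
    by_cases h : yh i = 0
    · exact ⟨0, fun h' => absurd h h'⟩
    · obtain ⟨c, hc⟩ := ApproxAux.exists_ordEq (yh i) h
      exact ⟨c, fun _ => hc⟩
  choose c hc using hcex
  -- witness exponent of minimal degree with nonzero coefficient
  have haex : ∀ i : Fin m, ∃ α : Fin n →₀ ℕ, yh i ≠ 0 →
      ((∑ j, α j) = c i ∧ MvPowerSeries.coeff α (yh i) ≠ 0) := by
    intro i
    by_cases h : yh i = 0
    · exact ⟨0, fun h' => absurd h h'⟩
    · obtain ⟨h1, h2⟩ := hc i h
      rw [OrdGE] at h2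
      push_neg at h2
      obtain ⟨α, hα1, hα2⟩ := h2
      refine ⟨α, fun _ => ⟨?_, hα2⟩⟩
      by_contra hne
      exact hα2 (h1 α (by omega))
  choose a ha using haex
  set F := ApproxAux.Eqs f J yh c a with hF
  -- the canonical solution over K'
  set x' : ApproxAux.Idx n m → K' := fun v =>
    Sum.elim (fun iα : Fin m × (Fin n →₀ ℕ) => MvPowerSeries.coeff iα.2 (yh iα.1))
      (fun iα : Fin m × (Fin n →₀ ℕ) => (MvPowerSeries.coeff iα.2 (yh iα.1))⁻¹) v with hx'def
  have hx'inl : ∀ (i : Fin m) (β : Fin n →₀ ℕ),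
      x' (Sum.inl (i, β)) = MvPowerSeries.coeff β (yh i) := fun i β => rfl
  have hx' : ∀ e, MvPolynomial.eval x' (MvPolynomial.map φ (F e)) = 0 := by
    rintro (⟨k, α⟩ | ⟨i, α⟩ | i)
    · show MvPolynomial.eval x' (MvPolynomial.map φ (ApproxAux.P (f k) α)) = 0
      rw [ApproxAux.eval_map_P φ x' (f k) α yh hx'inl, hsol k, map_zero]
    · show MvPolynomial.eval x' (MvPolynomial.map φ
        (if (¬ (↑α.support ⊆ J i)) ∨ yh i = 0 ∨ (∑ j, α j) < c i
         then MvPolynomial.X (Sum.inl (i, α)) else 0)) = 0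
      by_cases hcond : (¬ (↑α.support ⊆ J i)) ∨ yh i = 0 ∨ (∑ j, α j) < c i
      · rw [if_pos hcond, MvPolynomial.map_X, MvPolynomial.eval_X, hx'inl]
        rcases hcond with h | h | h
        · exact hcon i α h
        · rw [h, map_zero]
        · by_cases h0 : yh i = 0
          · rw [h0, map_zero]
          · exact (hc i h0).1 α h
      · rw [if_neg hcond, map_zero, map_zero]
    · show MvPolynomial.eval x' (MvPolynomial.map φ
        (if yh i = 0 then 0
         else MvPolynomial.X (Sum.inl (i, a i)) * MvPolynomial.X (Sum.inr (i, a i)) - 1)) = 0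
      by_cases h0 : yh i = 0
      · rw [if_pos h0, map_zero, map_zero]
      · rw [if_neg h0]
        obtain ⟨ha1, ha2⟩ := ha i h0
        simp only [map_sub, map_one, map_mul, MvPolynomial.map_X, MvPolynomial.eval_X]
        rw [hx'inl]
        show MvPowerSeries.coeff (a i) (yh i)
            * (MvPowerSeries.coeff (a i) (yh i))⁻¹ - 1 = 0
        rw [mul_inv_cancel₀ ha2, sub_self]
  -- solve the whole system over K
  obtain ⟨x, hx⟩ : ∃ x : ApproxAux.Idx n m → K, ∀ e, MvPolynomial.eval x (F e) = 0 := by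
    refine ApproxAux.solve_all hK F (fun t => ?_)
    obtain ⟨x, hxx⟩ := ApproxAux.descend_finite φ hpure (t.image F) x' (by
      intro p hp
      rw [Finset.mem_image] at hp
      obtain ⟨e, _, rfl⟩ := hp
      exact hx' e)
    exact ⟨x, fun e he => hxx (F e) (Finset.mem_image_of_mem F he)⟩
  refine ⟨ApproxAux.mkSeries x, ?_, ?_, ?_⟩
  · intro k
    ext α
    rw [← ApproxAux.eval_P x (f k) α, map_zero]
    exact hx (Sum.inl (k, α))
  · intro i α hα
    have := hx (Sum.inr (Sum.inl (i, α)))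
    rw [hF, ApproxAux.Eqs_inr_inl, if_pos (Or.inl hα), MvPolynomial.eval_X] at this
    exact this
  · intro i cc
    by_cases h0 : yh i = 0
    · have hy0 : ∀ α : Fin n →₀ ℕ, MvPowerSeries.coeff α (ApproxAux.mkSeries x i) = 0 := by
        intro α
        have := hx (Sum.inr (Sum.inl (i, α)))
        rw [hF, ApproxAux.Eqs_inr_inl, if_pos (Or.inr (Or.inl h0)),
          MvPolynomial.eval_X] at this
        exact this
      exact iff_of_true (fun α _ => hy0 α) (fun α _ => by rw [h0, map_zero])
    · obtain ⟨h1, h2⟩ := hc i h0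
      obtain ⟨ha1, ha2⟩ := ha i h0
      have hyK1 : OrdGE (ApproxAux.mkSeries x i) (c i) := by
        intro α hα
        have := hx (Sum.inr (Sum.inl (i, α)))
        rw [hF, ApproxAux.Eqs_inr_inl, if_pos (Or.inr (Or.inr hα)),
          MvPolynomial.eval_X] at this
        exact this
      have hyK2 : ¬ OrdGE (ApproxAux.mkSeries x i) (c i + 1) := by
        have := hx (Sum.inr (Sum.inr i))
        rw [hF, ApproxAux.Eqs_inr_inr, if_neg h0] at this
        simp only [map_sub, map_one, map_mul, MvPolynomial.eval_X] at this
        have hne : x (Sum.inl (i, a i)) ≠ 0 := by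
          intro hzero
          rw [hzero, zero_mul] at this
          norm_num at this
        intro hOrd
        exact hne (hOrd (a i) (by omega))
      rw [ApproxAux.ordGE_iff_le hyK1 hyK2, ApproxAux.ordGE_iff_le h1 h2]
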